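/- One has the factorization identity (s·I_{n+1} + c·F₂)(s·I_{n+1} + c·F₁) = −c₂, where c₂ := −[[s²·I_{n−1} + ((λ+μ)/μ) ξ♯ξᵀ, 0, 0], [0, (μ/(λ+2μ)) s², 0], [0, 0, s²]]. -/

import Mathlib

noncomputable section

open Matrix

/-- Block matrix `[[T, col, 0], [row, d, 0], [0, 0, e]]` of size `(n+1) × (n+1)`,
with blocks of sizes `n-1, 1, 1`. -/
def blk (n : ℕ) (T : Fin (n-1) → Fin (n-1) → ℂ) (colv rowv : Fin (n-1) → ℂ)
    (d e : ℂ) : Matrix (Fin (n+1)) (Fin (n+1)) ℂ :=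
  Matrix.of fun i j =>
    if hi : (i : ℕ) < n - 1 then
      if hj : (j : ℕ) < n - 1 then T ⟨i, hi⟩ ⟨j, hj⟩
      else if (j : ℕ) = n - 1 then colv ⟨i, hi⟩ else 0
    else if (i : ℕ) = n - 1 then
      if hj : (j : ℕ) < n - 1 then rowv ⟨j, hj⟩
      else if (j : ℕ) = n - 1 then d else 0
    else if (j : ℕ) = n then e else 0

/-- The matrix `F₁ = [[(1/s)ξ♯ξᵀ, i ξ♯, 0], [i ξᵀ, −s, 0], [0, 0, 0]]`. -/
def F1mat (n : ℕ) (ξ ξs : Fin (n-1) → ℝ) (s : ℝ) :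
    Matrix (Fin (n+1)) (Fin (n+1)) ℂ :=
  blk n (fun a b => ((1 / s * ξs a * ξ b : ℝ) : ℂ))
    (fun a => Complex.I * ((ξs a : ℝ) : ℂ))
    (fun b => Complex.I * ((ξ b : ℝ) : ℂ))
    ((-s : ℝ) : ℂ) 0

/-- The matrix `F₂ = [[(1/s)ξ♯ξᵀ, −i((λ+2μ)/μ) ξ♯, 0], [−i(μ/(λ+2μ)) ξᵀ, −s, 0], [0, 0, 0]]`. -/
def F2mat (n : ℕ) (ξ ξs : Fin (n-1) → ℝ) (s lam mu : ℝ) :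
    Matrix (Fin (n+1)) (Fin (n+1)) ℂ :=
  blk n (fun a b => ((1 / s * ξs a * ξ b : ℝ) : ℂ))
    (fun a => -(Complex.I * (((lam + 2*mu)/mu * ξs a : ℝ) : ℂ)))
    (fun b => -(Complex.I * ((mu/(lam + 2*mu) * ξ b : ℝ) : ℂ)))
    ((-s : ℝ) : ℂ) 0

/-- `b₁ = i(λ+μ)·[[0, (1/μ) ξ♯, 0], [(1/(λ+2μ)) ξᵀ, 0, 0], [0, 0, 0]]`. -/
def b1mat (n : ℕ) (ξ ξs : Fin (n-1) → ℝ) (lam mu : ℝ) :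
    Matrix (Fin (n+1)) (Fin (n+1)) ℂ :=
  (Complex.I * ((lam + mu : ℝ) : ℂ)) •
    blk n (fun _ _ => 0)
      (fun a => ((1/mu * ξs a : ℝ) : ℂ))
      (fun b => ((1/(lam + 2*mu) * ξ b : ℝ) : ℂ)) 0 0

/-- `c₂ = −[[s²·I + ((λ+μ)/μ) ξ♯ξᵀ, 0, 0], [0, (μ/(λ+2μ)) s², 0], [0, 0, s²]]`. -/
def c2mat (n : ℕ) (ξ ξs : Fin (n-1) → ℝ) (s lam mu : ℝ) :
    Matrix (Fin (n+1)) (Fin (n+1)) ℂ :=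
  -(blk n
      (fun a b => ((s^2 * (if a = b then 1 else 0) + (lam + mu)/mu * ξs a * ξ b : ℝ) : ℂ))
      (fun _ => 0) (fun _ => 0)
      ((mu/(lam + 2*mu) * s^2 : ℝ) : ℂ) ((s^2 : ℝ) : ℂ))

/-- The principal symbol `p₁` of the thermoelastic Dirichlet-to-Neumann map. -/
def p1mat (n : ℕ) (ξ ξs : Fin (n-1) → ℝ) (s lam mu al : ℝ) :
    Matrix (Fin (n+1)) (Fin (n+1)) ℂ :=
  blk n
    (fun a b => ((mu * s * (if a = b then 1 else 0)
        + mu * (lam + mu)/((lam + 3*mu) * s) * ξs a * ξ b : ℝ) : ℂ))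
    (fun a => -(Complex.I * ((2 * mu^2/(lam + 3*mu) * ξs a : ℝ) : ℂ)))
    (fun b => Complex.I * ((2 * mu^2/(lam + 3*mu) * ξ b : ℝ) : ℂ))
    ((2 * mu * (lam + 2*mu)/(lam + 3*mu) * s : ℝ) : ℂ)
    ((al * s : ℝ) : ℂ)

/-- `A = blockdiag(μ·I, λ+2μ, α)`. -/
def Amat (n : ℕ) (lam mu al : ℝ) : Matrix (Fin (n+1)) (Fin (n+1)) ℂ :=
  blk n (fun a b => if a = b then ((mu : ℝ) : ℂ) else 0)
    (fun _ => 0) (fun _ => 0) ((lam + 2*mu : ℝ) : ℂ) ((al : ℝ) : ℂ)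

/-- `d₁ = [[0, iμ ξ♯, 0], [iλ ξᵀ, 0, 0], [0, 0, 0]]`. -/
def d1mat (n : ℕ) (ξ ξs : Fin (n-1) → ℝ) (lam mu : ℝ) :
    Matrix (Fin (n+1)) (Fin (n+1)) ℂ :=
  blk n (fun _ _ => 0)
    (fun a => Complex.I * ((mu * ξs a : ℝ) : ℂ))
    (fun b => Complex.I * ((lam * ξ b : ℝ) : ℂ)) 0 0

/-- `W = blockdiag(G⁻¹, 1, 1)`. -/
def Wmat (n : ℕ) (G : Matrix (Fin (n-1)) (Fin (n-1)) ℝ) :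
    Matrix (Fin (n+1)) (Fin (n+1)) ℂ :=
  blk n (fun a b => ((G⁻¹ a b : ℝ) : ℂ)) (fun _ => 0) (fun _ => 0) 1 1


section Helpers

lemma sum_split (m : ℕ) (g : Fin (m+3) → ℂ) :
    ∑ k, g k = (∑ a : Fin (m+1), g ⟨(a:ℕ), by omega⟩) + g ⟨m+1, by omega⟩ + g ⟨m+2, by omega⟩ := by
  rw [Fin.sum_univ_castSucc, Fin.sum_univ_castSucc]
  rfl

set_option maxHeartbeats 0 in
lemma blk_mul (m : ℕ) (T T' : Fin (m+1) → Fin (m+1) → ℂ) (cv cv' rv rv' : Fin (m+1) → ℂ)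
    (d d' e e' : ℂ) :
    blk (m+2) T cv rv d e * blk (m+2) T' cv' rv' d' e' =
    blk (m+2) (fun a b => (∑ k, T a k * T' k b) + cv a * rv' b)
      (fun a => (∑ k, T a k * cv' k) + cv a * d')
      (fun b => (∑ k, rv k * T' k b) + d * rv' b)
      ((∑ k, rv k * cv' k) + d * d') (e * e') := by
  have e1 : (m+2) - 1 = m+1 := rfl
  have e2 : ¬ (m+1 < m+1) := by omega
  have e3 : ¬ (m+2 < m+1) := by omega
  have e4 : ¬ ((m+2:ℕ) = m+1) := by omega
  ext i j
  rw [Matrix.mul_apply, sum_split]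
  have e5 : ∀ x : Fin (m+1), ¬ ((x:ℕ) = m+2) := fun x => by omega
  have hcase : ∀ k : Fin (m+3), (k:ℕ) ≤ m ∨ (k:ℕ) = m+1 ∨ (k:ℕ) = m+2 := fun k => by omega
  rcases hcase i with hi | hi | hi <;> rcases hcase j with hj | hj | hj <;>
  simp [blk, e1, e2, e3, e4, e5, hi, hj, Finset.mul_sum, mul_comm, Fin.is_le]

set_option maxHeartbeats 1000000 in
lemma smul_one_add_blk (m : ℕ) (x y : ℂ) (T : Fin (m+1) → Fin (m+1) → ℂ)
    (cv rv : Fin (m+1) → ℂ) (d e : ℂ) :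
    x • (1 : Matrix (Fin (m+3)) (Fin (m+3)) ℂ) + y • blk (m+2) T cv rv d e =
    blk (m+2) (fun a b => x * (if a = b then 1 else 0) + y * T a b)
      (fun a => y * cv a) (fun b => y * rv b) (x + y * d) (x + y * e) := by
  have e1 : (m+2) - 1 = m+1 := rfl
  have e2 : ¬ (m+1 < m+1) := by omega
  have e3 : ¬ (m+2 < m+1) := by omega
  have e4 : ¬ ((m+2:ℕ) = m+1) := by omega
  have hcase : ∀ k : Fin (m+3), (k:ℕ) < m+1 ∨ (k:ℕ) = m+1 ∨ (k:ℕ) = m+2 := fun k => by omega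
  ext i j
  have hij : i = j ↔ (i:ℕ) = (j:ℕ) := ⟨fun h => by rw [h], fun h => Fin.ext h⟩
  rcases hcase i with hi | hi | hi <;> rcases hcase j with hj | hj | hj <;>
  simp only [blk, Matrix.add_apply, Matrix.smul_apply, Matrix.one_apply, of_apply, e1,
    smul_eq_mul, hij] <;>
  simp [hi, hj, e2, e3, e4, Fin.ext_iff]
  all_goals first
  | (intro h; exact absurd h (by omega))
  | (split_ifs <;> first | rfl | (exfalso; omega) | ring)

lemma blk_smul (n : ℕ) (z : ℂ) (T : Fin (n-1) → Fin (n-1) → ℂ) (cv rv : Fin (n-1) → ℂ)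
    (d e : ℂ) :
    z • blk n T cv rv d e =
    blk n (fun a b => z * T a b) (fun a => z * cv a) (fun b => z * rv b) (z*d) (z*e) := by
  ext i j
  simp only [blk, Matrix.smul_apply, of_apply, smul_eq_mul]
  split_ifs <;> simp

lemma blk_add (n : ℕ) (T T' : Fin (n-1) → Fin (n-1) → ℂ) (cv cv' rv rv' : Fin (n-1) → ℂ)
    (d d' e e' : ℂ) :
    blk n T cv rv d e + blk n T' cv' rv' d' e' =
    blk n (fun a b => T a b + T' a b) (fun a => cv a + cv' a) (fun b => rv b + rv' b)
      (d + d') (e + e') := by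
  ext i j
  simp only [blk, Matrix.add_apply, of_apply]
  split_ifs <;> simp

lemma blk_congr (n : ℕ) {T T' : Fin (n-1) → Fin (n-1) → ℂ} {cv cv' rv rv' : Fin (n-1) → ℂ}
    {d d' e e' : ℂ} (hT : ∀ a b, T a b = T' a b) (hc : ∀ a, cv a = cv' a)
    (hr : ∀ b, rv b = rv' b) (hd : d = d') (he : e = e') :
    blk n T cv rv d e = blk n T' cv' rv' d' e' := by
  ext i j
  simp only [blk, of_apply]
  split_ifs <;> simp [hT, hc, hr, hd, he]

end Helpers

set_option maxHeartbeats 4000000 in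
/-- (s·I + c·F₂)(s·I + c·F₁) = −c₂. -/
theorem stmt3 (n : ℕ) (hn : 2 ≤ n)
    (G : Matrix (Fin (n-1)) (Fin (n-1)) ℝ) (hG : G.PosDef)
    (ξ : Fin (n-1) → ℝ) (hξ : ξ ≠ 0)
    (ξs : Fin (n-1) → ℝ) (hξs : ξs = G.mulVec ξ)
    (s : ℝ) (hs : s = Real.sqrt (ξ ⬝ᵥ G.mulVec ξ))
    (lam mu : ℝ) (hmu : 0 < mu) (hlm : 0 ≤ lam + mu)
    (c : ℝ) (hc : c = (lam + mu)/(lam + 3*mu)) :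
    ((s : ℂ) • (1 : Matrix (Fin (n+1)) (Fin (n+1)) ℂ) + (c : ℂ) • F2mat n ξ ξs s lam mu)
      * ((s : ℂ) • (1 : Matrix (Fin (n+1)) (Fin (n+1)) ℂ) + (c : ℂ) • F1mat n ξ ξs s)
    = -(c2mat n ξ ξs s lam mu)  := by
  obtain ⟨m, rfl⟩ : ∃ m, n = m + 2 := ⟨n - 2, by omega⟩
  have hpos : 0 < ξ ⬝ᵥ G.mulVec ξ := by simpa using hG.dotProduct_mulVec_pos hξ
  have hs0 : 0 < s := by rw [hs]; exact Real.sqrt_pos.mpr hpos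
  have hs2 : s^2 = ∑ k, ξ k * ξs k := by
    rw [hs, Real.sq_sqrt hpos.le, hξs]; rfl
  have key : (∑ k : Fin (m+1), ((ξ k : ℝ) : ℂ) * ((ξs k : ℝ) : ℂ)) = ((s:ℝ):ℂ)^2 := by
    have h := congrArg Complex.ofReal hs2
    push_cast at h
    rw [h]
    rfl
  have hsne : (s:ℂ) ≠ 0 := by exact_mod_cast hs0.ne'
  have hmune : (mu:ℝ) ≠ 0 := hmu.ne'
  have hl2 : (0:ℝ) < lam + 2*mu := by linarith
  have hl3 : (0:ℝ) < lam + 3*mu := by linarith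
  have hl2ne : (lam + 2*mu : ℝ) ≠ 0 := hl2.ne'
  have hl3ne : (lam + 3*mu : ℝ) ≠ 0 := hl3.ne'
  have hmuC : ((mu:ℝ):ℂ) ≠ 0 := by exact_mod_cast hmune
  have hl2C : ((lam:ℂ) + 2*(mu:ℂ)) ≠ 0 := by exact_mod_cast hl2ne
  have hl3C : ((lam:ℂ) + 3*(mu:ℂ)) ≠ 0 := by exact_mod_cast hl3ne
  have h2' : lam + mu*2 ≠ 0 := by linarith
  have h3' : lam + mu*3 ≠ 0 := by linarith
  have h2C' : (mu:ℂ)*2 + (lam:ℂ) ≠ 0 := by rw [add_comm, mul_comm]; exact hl2C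
  have h3C' : (mu:ℂ)*3 + (lam:ℂ) ≠ 0 := by rw [add_comm, mul_comm]; exact hl3C
  have h2C'' : (lam:ℂ) + (mu:ℂ)*2 ≠ 0 := by rw [mul_comm]; exact hl2C
  have h3C'' : (lam:ℂ) + (mu:ℂ)*3 ≠ 0 := by rw [mul_comm]; exact hl3C
  -- step 1: compute F₂ * F₁
  have hF2F1 : F2mat (m+2) ξ ξs s lam mu * F1mat (m+2) ξ ξs s =
      blk (m+2)
        (fun a b => (((lam+3*mu)/mu * ξs a * ξ b : ℝ) : ℂ))
        (fun a => Complex.I * ((s * ((lam+3*mu)/mu) * ξs a : ℝ) : ℂ))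
        (fun b => -(Complex.I * ((s * ((lam+3*mu)/(lam+2*mu)) * ξ b : ℝ) : ℂ)))
        (((lam+3*mu)/(lam+2*mu) * s^2 : ℝ) : ℂ) 0 := by
    rw [F2mat, F1mat, blk_mul]
    refine blk_congr _ ?_ ?_ ?_ ?_ (by ring)
    · intro a b
      have h1 : ∀ k : Fin (m+1), ((1/s * ξs a * ξ k : ℝ):ℂ) * ((1/s * ξs k * ξ b : ℝ):ℂ)
          = (1/(s:ℂ) * (1/(s:ℂ)) * ((ξs a:ℝ):ℂ) * ((ξ b:ℝ):ℂ)) * (((ξ k:ℝ):ℂ) * ((ξs k:ℝ):ℂ)) := by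
        intro k; push_cast; ring
      rw [Finset.sum_congr rfl fun k _ => h1 k, ← Finset.mul_sum, key]
      rw [neg_mul, mul_mul_mul_comm, Complex.I_mul_I]
      push_cast
      field_simp [hmuC, hl2C, hl3C, hsne]
      ring
    · intro a
      have h1 : ∀ k : Fin (m+1), ((1/s * ξs a * ξ k : ℝ):ℂ) * (Complex.I * ((ξs k:ℝ):ℂ))
          = (Complex.I * (1/(s:ℂ)) * ((ξs a:ℝ):ℂ)) * (((ξ k:ℝ):ℂ) * ((ξs k:ℝ):ℂ)) := by
        intro k; push_cast; ring
      rw [Finset.sum_congr rfl fun k _ => h1 k, ← Finset.mul_sum, key]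
      push_cast
      field_simp [hmuC, hl2C, hl3C, hsne]
      ring
    · intro b
      have h1 : ∀ k : Fin (m+1), (-(Complex.I * ((mu/(lam+2*mu) * ξ k : ℝ):ℂ))) * ((1/s * ξs k * ξ b : ℝ):ℂ)
          = (-(Complex.I * ((mu:ℂ)/((lam:ℂ)+2*mu) * (1/(s:ℂ)) * ((ξ b:ℝ):ℂ)))) * (((ξ k:ℝ):ℂ) * ((ξs k:ℝ):ℂ)) := by
        intro k; push_cast; ring
      rw [Finset.sum_congr rfl fun k _ => h1 k, ← Finset.mul_sum, key]
      push_cast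
      field_simp [hmuC, hl2C, hl3C, hsne]
      ring
    · have h1 : ∀ k : Fin (m+1), (-(Complex.I * ((mu/(lam+2*mu) * ξ k : ℝ):ℂ))) * (Complex.I * ((ξs k:ℝ):ℂ))
          = ((mu:ℂ)/((lam:ℂ)+2*mu)) * (((ξ k:ℝ):ℂ) * ((ξs k:ℝ):ℂ)) := by
        intro k
        rw [neg_mul, mul_mul_mul_comm, Complex.I_mul_I]
        push_cast
        ring
      rw [Finset.sum_congr rfl fun k _ => h1 k, ← Finset.mul_sum, key]
      push_cast
      field_simp [hmuC, hl2C, hl3C, hsne]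
      ring
  have hexp : ((s:ℂ) • (1 : Matrix (Fin (m+2+1)) (Fin (m+2+1)) ℂ) + (c:ℂ) • F2mat (m+2) ξ ξs s lam mu)
      * ((s:ℂ) • (1 : Matrix (Fin (m+2+1)) (Fin (m+2+1)) ℂ) + (c:ℂ) • F1mat (m+2) ξ ξs s)
      = ((s:ℂ)*(s:ℂ)) • (1 : Matrix (Fin (m+2+1)) (Fin (m+2+1)) ℂ) + (1:ℂ) •
        (((s:ℂ)*(c:ℂ)) • F2mat (m+2) ξ ξs s lam mu +
         (((c:ℂ)*(s:ℂ)) • F1mat (m+2) ξ ξs s +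
          ((c:ℂ)*(c:ℂ)) • (F2mat (m+2) ξ ξs s lam mu * F1mat (m+2) ξ ξs s))) := by
    simp only [add_mul, mul_add, smul_mul_assoc, mul_smul_comm, one_mul, mul_one, smul_smul,
      smul_add, one_smul]
    abel
  have hT : s*c*(1/s) + c*s*(1/s) + c*c*((lam+3*mu)/mu) = (lam+mu)/mu := by
    rw [hc]; field_simp; ring
  have hQ : s*c - c*s*((lam+2*mu)/mu) + c*c*(s*((lam+3*mu)/mu)) = 0 := by
    rw [hc]; field_simp; ring
  have hR : s*c*(mu/(lam+2*mu)) - c*s + c*c*(s*((lam+3*mu)/(lam+2*mu))) = 0 := by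
    rw [hc]; field_simp; ring
  have hD : s*s + s*c*(-s) + c*s*(-s) + c*c*((lam+3*mu)/(lam+2*mu)*s^2)
      = mu/(lam+2*mu)*s^2 := by
    rw [hc]; field_simp; ring
  have hTC := congrArg Complex.ofReal hT
  have hQC := congrArg Complex.ofReal hQ
  have hRC := congrArg Complex.ofReal hR
  have hDC := congrArg Complex.ofReal hD
  push_cast at hTC hQC hRC hDC
  rw [hexp, hF2F1, c2mat, neg_neg, F1mat, F2mat, blk_smul, blk_smul, blk_smul, blk_add,
    blk_add, smul_one_add_blk]
  refine blk_congr _ ?_ ?_ ?_ ?_ ?_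
  · intro a b
    split_ifs with h
    · push_cast
      linear_combination (((ξs a : ℝ):ℂ) * ((ξ b : ℝ):ℂ)) * hTC
    · push_cast
      linear_combination (((ξs a : ℝ):ℂ) * ((ξ b : ℝ):ℂ)) * hTC
  · intro a
    push_cast
    linear_combination (Complex.I * ((ξs a : ℝ):ℂ)) * hQC
  · intro b
    push_cast
    linear_combination (-(Complex.I * ((ξ b : ℝ):ℂ))) * hRC
  · push_cast
    linear_combination hDC
  · push_cast
    ring
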